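/- The function g(x) = (e^x(x+1) + x - 1)/(2x) is strictly increasing on (0, ∞). -/

import Mathlib

theorem NB_strictMono :
    StrictMonoOn (fun x : ℝ => (Real.exp x * (x + 1) + x - 1) / (2 * x)) (Set.Ioi 0) := by
  have key : ∀ x : ℝ, 0 < x → 0 < Real.exp x * (x ^ 2 + x - 1) + 1 := by
    intro x hx
    have h1 : Real.exp x * (1 - x) ≤ 1 := by
      have h2 : (-x) + 1 ≤ Real.exp (-x) := Real.add_one_le_exp (-x)
      have h3 : Real.exp x * Real.exp (-x) = 1 := by
        rw [← Real.exp_add]; simp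
      nlinarith [Real.exp_pos x]
    nlinarith [mul_pos (Real.exp_pos x) (mul_pos hx hx)]
  apply strictMonoOn_of_deriv_pos (convex_Ioi 0)
  · apply ContinuousOn.div
    · fun_prop
    · fun_prop
    · intro x hx
      have : (0:ℝ) < x := hx
      positivity
  · intro x hx
    rw [interior_Ioi] at hx
    have hx0 : (0:ℝ) < x := hx
    have hne : (2 * x : ℝ) ≠ 0 := by positivity
    have hu : HasDerivAt (fun x : ℝ => Real.exp x * (x + 1) + x - 1)
        (Real.exp x * (x + 1) + Real.exp x * 1 + 1) x := by
      have := (((Real.hasDerivAt_exp x).mul ((hasDerivAt_id x).add_const 1)).add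
        (hasDerivAt_id x)).sub_const 1
      simpa [mul_comm] using this
    have hv : HasDerivAt (fun x : ℝ => 2 * x) 2 x := by
      simpa using (hasDerivAt_id x).const_mul (2:ℝ)
    have hd : HasDerivAt (fun x : ℝ => (Real.exp x * (x + 1) + x - 1) / (2 * x)) _ x := hu.div hv hne
    rw [hd.deriv]
    apply div_pos
    · nlinarith [key x hx0, Real.exp_pos x]
    · positivity
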